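/- For every α ∈ [0,1] with α ≠ 1/2 or α = 1/2 (i.e., for all α ∈ [0,1]), h(2α(1−α)) + f_A(2α(1−α), α) = h(α). (Note 2α(1−α) ≤ 1/2 < 1 and α(1−α) ≤ α ≤ 1 − α(1−α), so the expression is well defined for every α ∈ [0,1].) -/

import Mathlib

/-- Binary entropy function (base-2 logs), with the convention `0 * log 0 = 0`. -/
noncomputable def binEnt (x : ℝ) : ℝ :=
  -(x * Real.logb 2 x) - (1 - x) * Real.logb 2 (1 - x)

/-- The spectral shape exponent of the accumulator:
`f_A(α,β) = α − h(β) + (1−α)·h((β−α/2)/(1−α))`. -/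
noncomputable def fA (α β : ℝ) : ℝ :=
  α - binEnt β + (1 - α) * binEnt ((β - α / 2) / (1 - α))

/-- The spectral shape exponent of the discrete derivative:
`f_D(α,β) = (1−α)·h(β/(2(1−α))) + α·h(β/(2α)) − h(α)`. -/
noncomputable def fD (α β : ℝ) : ℝ :=
  (1 - α) * binEnt (β / (2 * (1 - α))) + α * binEnt (β / (2 * α)) - binEnt α

/-- `h(2α(1−α)) + f_A(2α(1−α), α) = h(α)` for every `α ∈ [0,1]`. -/
theorem entropy_fA_identity (α : ℝ) (hα0 : 0 ≤ α) (hα1 : α ≤ 1) :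
    binEnt (2 * α * (1 - α)) + fA (2 * α * (1 - α)) α = binEnt α := by
  rcases eq_or_lt_of_le hα0 with h0 | h0
  · simp [← h0, binEnt, fA]
  rcases eq_or_lt_of_le hα1 with h1 | h1
  · simp [h1, binEnt, fA]
  -- now 0 < α < 1
  have hαne : α ≠ 0 := ne_of_gt h0
  have hβ : (0:ℝ) < 1 - α := by linarith
  have hβne : (1:ℝ) - α ≠ 0 := ne_of_gt hβ
  have hane : (1:ℝ) - 2 * α * (1 - α) ≠ 0 := by nlinarith
  have harg : (α - 2 * α * (1 - α) / 2) / (1 - 2 * α * (1 - α))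
      = α ^ 2 / (1 - 2 * α * (1 - α)) := by
    field_simp; ring
  have harg2 : 1 - α ^ 2 / (1 - 2 * α * (1 - α))
      = (1 - α) ^ 2 / (1 - 2 * α * (1 - α)) := by
    rw [one_sub_div hane]; congr 1; ring
  have l1 : Real.logb 2 (2 * α * (1 - α))
      = 1 + Real.logb 2 α + Real.logb 2 (1 - α) := by
    rw [Real.logb_mul (by positivity) hβne, Real.logb_mul (by norm_num) hαne,
      Real.logb_self_eq_one (by norm_num)]
  have l2 : Real.logb 2 (α ^ 2 / (1 - 2 * α * (1 - α)))
      = 2 * Real.logb 2 α - Real.logb 2 (1 - 2 * α * (1 - α)) := by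
    rw [Real.logb_div (by positivity) hane, Real.logb_pow]
    push_cast; ring
  have l3 : Real.logb 2 ((1 - α) ^ 2 / (1 - 2 * α * (1 - α)))
      = 2 * Real.logb 2 (1 - α) - Real.logb 2 (1 - 2 * α * (1 - α)) := by
    rw [Real.logb_div (by positivity) hane, Real.logb_pow]
    push_cast; ring
  simp only [binEnt, fA]
  rw [harg, harg2, l1, l2, l3]
  field_simp
  ring
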